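/- Let ℓ, m, N ∈ ℕ with ℓ ≤ m ≤ N, and let C_ℓ = (e^ℓ · ℓ! / ℓ^{ℓ+1/2})^{1/2}. Then N^{N/2} / ((N−m)^{(N−m)/2} · m^{m/2+1/4} · binom(N,m)^{1/2}) ≤ C_ℓ, with the convention 0^0 = 1. -/

import Mathlib

open Real

/-- `(n+1)^n ≤ e^1 * n^n` -/
lemma aux_pow (n : ℕ) : ((n : ℝ) + 1) ^ n ≤ Real.exp 1 * (n : ℝ) ^ n := by
  rcases Nat.eq_zero_or_pos n with h | h
  · subst h; simpa using Real.one_le_exp zero_le_one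
  · have hn : (0:ℝ) < n := by exact_mod_cast h
    have h2 : ((1 : ℝ) + 1 / n) ^ n ≤ Real.exp (1 / n) ^ n := by
      apply pow_le_pow_left₀ (by positivity) _ n
      linarith [Real.add_one_le_exp (1 / (n:ℝ))]
    have h3 : Real.exp (1 / (n:ℝ)) ^ n = Real.exp 1 := by
      rw [← Real.exp_nat_mul]
      congr 1
      field_simp
    have h4 : ((n:ℝ) + 1) ^ n = (n:ℝ) ^ n * ((1:ℝ) + 1 / n) ^ n := by
      rw [← mul_pow]
      congr 1
      field_simp
    rw [h4]
    rw [h3] at h2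
    calc (n:ℝ) ^ n * ((1:ℝ) + 1 / n) ^ n ≤ (n:ℝ)^n * Real.exp 1 := by
          apply mul_le_mul_of_nonneg_left h2 (by positivity)
      _ = Real.exp 1 * (n:ℝ)^n := by ring

/-- `g n = n^n / (e^n n!)` is antitone. -/
lemma aux_g_anti : Antitone (fun n : ℕ => (n : ℝ) ^ n / (Real.exp n * n.factorial)) := by
  apply antitone_nat_of_succ_le
  intro n
  rw [div_le_div_iff₀ (by positivity) (by positivity)]
  have h := aux_pow n
  push_cast [Nat.factorial_succ, pow_succ]
  have he : Real.exp ((n:ℝ) + 1) = Real.exp n * Real.exp 1 := by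
    rw [← Real.exp_add]
  rw [he]
  have hfac : (0:ℝ) ≤ n.factorial := by positivity
  have hexp : (0:ℝ) ≤ Real.exp n := le_of_lt (Real.exp_pos _)
  nlinarith [pow_nonneg (Nat.cast_nonneg (α := ℝ) n) n, mul_nonneg hexp hfac,
    mul_le_mul_of_nonneg_right h (mul_nonneg hexp hfac), Real.exp_pos 1,
    Nat.cast_nonneg (α := ℝ) n]

/-- key: for k ≤ N, `N^N * k! ≤ e^(N-k) * N! * k^k` where m = N - k -/
lemma aux_key (m k : ℕ) : ((m + k : ℕ) : ℝ) ^ (m + k) * k.factorial ≤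
    Real.exp m * (m + k).factorial * (k : ℝ) ^ k := by
  have h := aux_g_anti (Nat.le_add_left k m)
  simp only at h
  rw [div_le_div_iff₀ (by positivity) (by positivity)] at h
  have he : Real.exp ((m + k : ℕ) : ℝ) = Real.exp m * Real.exp k := by
    push_cast
    rw [← Real.exp_add]
  rw [he] at h
  have hek : (0:ℝ) < Real.exp k := Real.exp_pos _
  have hkk : (0:ℝ) < (k:ℝ) ^ k := by
    rcases Nat.eq_zero_or_pos k with h0 | h0
    · rw [h0]; norm_num
    · positivity
  nlinarith [h, hek, mul_pos (mul_pos (Real.exp_pos (m:ℝ)) (show (0:ℝ) < (m+k).factorial by positivity)) hkk]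

/-- `f n = e^n n! / n^(n+1/2)` equals `√2 * stirlingSeq n` for `n ≥ 1`, hence antitone on `[1,∞)`. -/
lemma aux_f_eq (n : ℕ) (hn : 1 ≤ n) :
    Real.exp n * n.factorial / (n : ℝ) ^ ((n : ℝ) + 1/2) = Real.sqrt 2 * Stirling.stirlingSeq n := by
  have hn0 : (0:ℝ) < n := by exact_mod_cast hn
  rw [Stirling.stirlingSeq]
  rw [Real.rpow_add hn0, Real.rpow_natCast, ← Real.sqrt_eq_rpow,
    Real.sqrt_mul (by norm_num : (0:ℝ) ≤ 2), div_pow]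
  have h1 : Real.sqrt (n:ℝ) ≠ 0 := by positivity
  have h2 : Real.exp 1 ^ n ≠ 0 := by positivity
  have h3 : ((n:ℝ)) ^ n ≠ 0 := by positivity
  field_simp
  rw [← Real.exp_nat_mul, mul_one]

lemma aux_stir_pos (n : ℕ) (hn : 1 ≤ n) : 0 < Stirling.stirlingSeq n := by
  have h : (0:ℝ) < n := by exact_mod_cast hn
  rw [Stirling.stirlingSeq]
  positivity

lemma aux_stir (a b : ℕ) (ha : 1 ≤ a) (hab : a ≤ b) :
    Stirling.stirlingSeq b ≤ Stirling.stirlingSeq a := by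
  have h := Stirling.log_stirlingSeq'_antitone (Nat.sub_le_sub_right hab 1)
  simp only [Function.comp, Nat.succ_eq_add_one] at h
  rw [Nat.sub_add_cancel ha, Nat.sub_add_cancel (ha.trans hab)] at h
  exact (Real.log_le_log_iff (aux_stir_pos b (ha.trans hab)) (aux_stir_pos a ha)).mp h

lemma aux_f_anti (a b : ℕ) (ha : 1 ≤ a) (hab : a ≤ b) :
    Real.exp b * b.factorial / (b : ℝ) ^ ((b : ℝ) + 1/2) ≤
      Real.exp a * a.factorial / (a : ℝ) ^ ((a : ℝ) + 1/2) := by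
  rw [aux_f_eq a ha, aux_f_eq b (ha.trans hab)]
  exact mul_le_mul_of_nonneg_left (aux_stir a b ha hab) (Real.sqrt_nonneg 2)

theorem stmt10 (ℓ m N : ℕ) (hℓ1 : 1 ≤ ℓ) (hℓm : ℓ ≤ m) (hmN : m ≤ N) :
    (N : ℝ) ^ ((N : ℝ) / 2) /
      (((N : ℝ) - m) ^ (((N : ℝ) - m) / 2) * (m : ℝ) ^ ((m : ℝ) / 2 + 1 / 4) *
        Real.sqrt (N.choose m)) ≤
      Real.sqrt (Real.exp ℓ * ℓ.factorial / (ℓ : ℝ) ^ ((ℓ : ℝ) + 1 / 2)) := by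
  set k := N - m with hk
  have hmk : m + k = N := Nat.add_sub_cancel' hmN
  have hℓ0 : (0:ℝ) < ℓ := by exact_mod_cast hℓ1
  have hm1 : 1 ≤ m := hℓ1.trans hℓm
  have hm0 : (0:ℝ) < m := by exact_mod_cast hm1
  have hN0 : (0:ℝ) < N := by exact_mod_cast hℓ1.trans (hℓm.trans hmN)
  have hC : (0:ℝ) < N.choose m := by exact_mod_cast Nat.choose_pos hmN
  have hcast : (N:ℝ) - m = (k:ℝ) := by
    rw [hk]; push_cast [Nat.cast_sub hmN]; ring
  rw [hcast]
  have hkk : (0:ℝ) < (k:ℝ) ^ ((k:ℝ)/2) := by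
    rcases Nat.eq_zero_or_pos k with h0 | h0
    · rw [h0]; norm_num
    · have : (0:ℝ) < k := by exact_mod_cast h0
      positivity
  have hmm : (0:ℝ) < (m:ℝ) ^ ((m:ℝ)/2 + 1/4) := Real.rpow_pos_of_pos hm0 _
  have hsC : (0:ℝ) < Real.sqrt (N.choose m) := Real.sqrt_pos.mpr hC
  rw [Real.le_sqrt (by positivity) (by positivity)]
  have sq_rpow : ∀ (a x : ℝ), 0 ≤ a → (a ^ x)^2 = a ^ (x*2) := by
    intro a x ha
    rw [Real.rpow_mul ha x 2, show ((2:ℝ)) = ((2:ℕ):ℝ) by norm_num, Real.rpow_natCast]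
  rw [div_pow, mul_pow, mul_pow, Real.sq_sqrt (Nat.cast_nonneg _),
    sq_rpow _ _ hN0.le, sq_rpow _ _ (Nat.cast_nonneg k), sq_rpow _ _ hm0.le,
    show ((N:ℝ)/2)*2 = (N:ℝ) by ring, show ((k:ℝ)/2)*2 = (k:ℝ) by ring,
    show ((m:ℝ)/2+1/4)*2 = (m:ℝ)+1/2 by ring,
    Real.rpow_natCast (N:ℝ) N, Real.rpow_natCast (k:ℝ) k]
  refine le_trans ?_ (aux_f_anti ℓ m hℓ1 hℓm)
  have hkkn : (0:ℝ) < (k:ℝ)^k := by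
    rcases Nat.eq_zero_or_pos k with h0 | h0
    · rw [h0]; norm_num
    · have : (0:ℝ) < k := by exact_mod_cast h0
      positivity
  have hmm2 : (0:ℝ) < (m:ℝ) ^ ((m:ℝ) + 1/2) := Real.rpow_pos_of_pos hm0 _
  have hkf : (0:ℝ) < k.factorial := by positivity
  have hmf : (0:ℝ) < m.factorial := by positivity
  have key' : (N:ℝ)^N * k.factorial ≤ Real.exp m * N.factorial * (k:ℝ)^k := by
    have := aux_key m k
    rwa [hmk] at this
  have key2 : (N:ℝ)^N ≤ Real.exp m * m.factorial * ((k:ℝ)^k * (N.choose m)) := by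
    rw [Nat.cast_choose ℝ hmN, show N - m = k from hk.symm]
    have heq : Real.exp m * m.factorial *
        ((k:ℝ)^k * ((N.factorial:ℝ)/(m.factorial * k.factorial))) =
        (Real.exp m * N.factorial * (k:ℝ)^k) / k.factorial := by
      field_simp
    rw [heq, le_div_iff₀ hkf]
    linarith [key']
  rw [div_le_div_iff₀ (by positivity) hmm2]
  calc (N:ℝ)^N * (m:ℝ)^((m:ℝ)+1/2)
      ≤ (Real.exp m * m.factorial * ((k:ℝ)^k * (N.choose m))) * (m:ℝ)^((m:ℝ)+1/2) :=
        mul_le_mul_of_nonneg_right key2 hmm2.le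
    _ = Real.exp m * m.factorial * ((k:ℝ)^k * (m:ℝ)^((m:ℝ)+1/2) * (N.choose m)) := by ring
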